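/- Let l_n : ℝ^k → [0,∞) be a sequence of nonnegative loss functions and θ̂_n an estimator in the k-dimensional Gaussian shift experiment satisfying P_{n,0}(θ̂_n = 0) → 1. Then for any 0 < ρ ≤ ∞, liminf_{n→∞} sup_{‖θ‖ < ρ/√n} E_{n,θ}[l_n(√n(θ̂_n − θ))] ≥ sup_{‖u‖ < ρ} liminf_{n→∞} l_n(u). -/

import Mathlib

open MeasureTheory ProbabilityTheory Filter Topology

/-- The k-dimensional Gaussian shift experiment: one observation `X ~ N(θ, n⁻¹ I_k)`,
realized as the product of the laws `N(θ i, 1/n)` over the coordinates. -/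
noncomputable def shiftP (k n : ℕ) (θ : Fin k → ℝ) : Measure (Fin k → ℝ) :=
  Measure.pi fun i => gaussianReal (θ i) ((n : NNReal))⁻¹

open Real
open scoped ENNReal NNReal



lemma lintegral_pi_prod : ∀ {m : ℕ} (μ : Fin m → Measure ℝ), (∀ i, SigmaFinite (μ i)) →
    ∀ (f : Fin m → ℝ → ℝ≥0∞), (∀ i, Measurable (f i)) →
    ∫⁻ x, ∏ i, f i (x i) ∂Measure.pi μ = ∏ i, ∫⁻ t, f i t ∂μ i := by
  intro m
  induction m with
  | zero =>
    intro μ _ f hf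
    simp [Measure.pi_of_empty]
  | succ m ih =>
    intro μ hσ f hf
    haveI := hσ
    have h := measurePreserving_piFinSuccAbove μ 0
    simp only [Fin.zero_succAbove] at h
    have hG : Measurable (fun y : Fin m → ℝ => ∏ i, f (Fin.succ i) (y i)) :=
      Finset.measurable_prod _ fun i _ => (hf _).comp (measurable_pi_apply i)
    have key : (fun x : Fin (m+1) → ℝ => ∏ i, f i (x i)) =
        (fun z : ℝ × (Fin m → ℝ) => f 0 z.1 * ∏ i, f (Fin.succ i) (z.2 i)) ∘
          (MeasurableEquiv.piFinSuccAbove (fun _ => ℝ) 0) := by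
      ext x
      simp [Fin.prod_univ_succ, MeasurableEquiv.piFinSuccAbove_apply, Fin.zero_succAbove, Fin.tail]
    calc ∫⁻ x, ∏ i, f i (x i) ∂Measure.pi μ
        = ∫⁻ z, f 0 z.1 * ∏ i, f (Fin.succ i) (z.2 i)
            ∂((μ 0).prod (Measure.pi fun i => μ (Fin.succ i))) := by
          rw [key]
          exact h.lintegral_comp (((hf 0).comp measurable_fst).mul (hG.comp measurable_snd))
      _ = (∫⁻ t, f 0 t ∂μ 0) * ∏ i, ∫⁻ t, f (Fin.succ i) t ∂μ (Fin.succ i) := by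
          rw [lintegral_prod_mul ((hf 0).aemeasurable) hG.aemeasurable,
            ih _ (fun i => inferInstance) _ fun i => hf _]
      _ = ∏ i, ∫⁻ t, f i t ∂μ i := (Fin.prod_univ_succ fun i => ∫⁻ t, f i t ∂μ i).symm


lemma indicator_pi_prod {k : ℕ} (s : Fin k → Set ℝ) (f : Fin k → ℝ → ℝ≥0∞) (x : Fin k → ℝ) :
    (Set.pi Set.univ s).indicator (fun x => ∏ i, f i (x i)) x
      = ∏ i, (s i).indicator (f i) (x i) := by
  by_cases hx : x ∈ Set.pi Set.univ s
  · rw [Set.indicator_of_mem hx]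
    exact Finset.prod_congr rfl fun i _ =>
      (Set.indicator_of_mem (hx i (Set.mem_univ i)) _).symm
  · rw [Set.indicator_of_notMem hx]
    obtain ⟨i, hi⟩ : ∃ i, x i ∉ s i := by simpa [Set.mem_pi] using hx
    exact (Finset.prod_eq_zero (Finset.mem_univ i) (Set.indicator_of_notMem hi _)).symm

lemma pi_withDensity {k : ℕ} (μ : Fin k → Measure ℝ) [∀ i, SigmaFinite (μ i)]
    (f : Fin k → ℝ → ℝ≥0∞) (hf : ∀ i, Measurable (f i))
    (hσ' : ∀ i, SigmaFinite ((μ i).withDensity (f i))) :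
    Measure.pi (fun i => (μ i).withDensity (f i))
      = (Measure.pi μ).withDensity (fun x => ∏ i, f i (x i)) := by
  haveI := hσ'
  refine Measure.pi_eq fun s hs => ?_
  rw [withDensity_apply _ (MeasurableSet.univ_pi hs), ← lintegral_indicator (MeasurableSet.univ_pi hs)]
  simp_rw [indicator_pi_prod s f]
  rw [lintegral_pi_prod μ inferInstance _ (fun i => (hf i).indicator (hs i))]
  exact Finset.prod_congr rfl fun i _ => by
    rw [lintegral_indicator (hs i), withDensity_apply _ (hs i)]


lemma gaussianReal_shift (m : ℝ) {v : NNReal} (hv : v ≠ 0) :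
    gaussianReal m v = (gaussianReal 0 v).withDensity
      (fun t => ENNReal.ofReal (Real.exp ((m * t - m ^ 2 / 2) / v))) := by
  have hv' : (v : ℝ) ≠ 0 := by exact_mod_cast hv
  rw [gaussianReal_of_var_ne_zero 0 hv, gaussianReal_of_var_ne_zero m hv,
    ← withDensity_mul _ (measurable_gaussianPDF 0 v)
      (by fun_prop : Measurable fun t => ENNReal.ofReal (Real.exp ((m * t - m ^ 2 / 2) / v)))]
  congr 1
  ext t
  rw [Pi.mul_apply, gaussianPDF, gaussianPDF,
    ← ENNReal.ofReal_mul (gaussianPDFReal_nonneg _ _ _)]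
  congr 1
  unfold gaussianPDFReal
  rw [mul_assoc _ (rexp _) (rexp _), ← Real.exp_add]
  congr 1
  rw [Real.exp_eq_exp]
  field_simp
  ring

lemma lintegral_exp_gaussian (s : ℝ) {v : NNReal} (hv : v ≠ 0) :
    ∫⁻ t, ENNReal.ofReal (Real.exp (s * t)) ∂gaussianReal 0 v
      = ENNReal.ofReal (Real.exp (s ^ 2 * v / 2)) := by
  have hv' : (v : ℝ) ≠ 0 := by exact_mod_cast hv
  rw [gaussianReal_of_var_ne_zero 0 hv,
    lintegral_withDensity_eq_lintegral_mul _ (measurable_gaussianPDF 0 v)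
      (by fun_prop : Measurable fun t => ENNReal.ofReal (Real.exp (s * t)))]
  have hpt : ∀ t, (gaussianPDF 0 v * fun t => ENNReal.ofReal (Real.exp (s * t))) t
      = ENNReal.ofReal (Real.exp (s ^ 2 * v / 2)) * gaussianPDF (s * v) v t := by
    intro t
    rw [Pi.mul_apply, gaussianPDF, gaussianPDF,
      ← ENNReal.ofReal_mul (gaussianPDFReal_nonneg _ _ _),
      ← ENNReal.ofReal_mul (Real.exp_nonneg _)]
    congr 1
    unfold gaussianPDFReal
    rw [mul_assoc _ (rexp _) (rexp _), ← Real.exp_add, mul_left_comm (rexp _), ← Real.exp_add]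
    congr 1
    rw [Real.exp_eq_exp]
    field_simp
    ring
  simp_rw [hpt]
  rw [lintegral_const_mul _ (measurable_gaussianPDF _ _), lintegral_gaussianPDF_eq_one _ hv,
    mul_one]



instance shiftP_prob (k n : ℕ) (θ : Fin k → ℝ) : IsProbabilityMeasure (shiftP k n θ) := by
  unfold shiftP; infer_instance

lemma aux_le (f M : ℝ≥0∞) (hM : M ≠ 0) : f ≤ M + f ^ 2 / M := by
  rcases le_or_gt f M with h | h
  · exact le_add_right h
  · have hMtop : M ≠ ∞ := fun hMt => by simp [hMt] at h
    calc f = f * 1 := (mul_one f).symm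
      _ ≤ f * (f / M) := by
          gcongr
          rw [ENNReal.le_div_iff_mul_le (Or.inl hM) (Or.inl hMtop), one_mul]
          exact h.le
      _ = f ^ 2 / M := by rw [← mul_div_assoc, ← sq]
      _ ≤ M + f ^ 2 / M := le_add_self

lemma step (k n : ℕ) (hn : 1 ≤ n) (u : Fin k → ℝ) (A : Set (Fin k → ℝ)) (hA : MeasurableSet A)
    (M : ℝ≥0∞) (hM0 : M ≠ 0) :
    shiftP k n (fun i => -(u i) / Real.sqrt n) Aᶜ
      ≤ M * shiftP k n 0 Aᶜ + (∏ i, ENNReal.ofReal (rexp (u i ^ 2))) / M := by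
  have hn' : (n : ℝ) ≠ 0 := Nat.cast_ne_zero.mpr (by omega)
  have hnn : ((n : NNReal)) ≠ 0 := Nat.cast_ne_zero.mpr (by omega)
  have hv : ((n : NNReal))⁻¹ ≠ 0 := by simp [hnn]
  set v : NNReal := ((n : NNReal))⁻¹ with hvdef
  have hvr : (v : ℝ) = (n : ℝ)⁻¹ := by
    rw [hvdef]; push_cast; rfl
  set c : Fin k → ℝ := fun i => -(u i) / Real.sqrt n with hc
  have hcsq : ∀ i, (c i) ^ 2 / (v : ℝ) = u i ^ 2 := by
    intro i
    rw [hvr, hc]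
    rw [div_pow, neg_pow, sq_sqrt (Nat.cast_nonneg n)]
    field_simp
  set g : Fin k → ℝ → ℝ≥0∞ :=
    fun i t => ENNReal.ofReal (Real.exp ((c i * t - c i ^ 2 / 2) / v)) with hg
  have hgmeas : ∀ i, Measurable (g i) := fun i => by fun_prop
  set F : (Fin k → ℝ) → ℝ≥0∞ := fun x => ∏ i, g i (x i) with hF
  have hFmeas : Measurable F :=
    Finset.measurable_prod _ fun i _ => (hgmeas i).comp (measurable_pi_apply i)
  have hQ : shiftP k n c = (shiftP k n 0).withDensity F := by
    unfold shiftP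
    have h1 : (fun i : Fin k => gaussianReal (c i) v)
        = fun i => (gaussianReal ((0 : Fin k → ℝ) i) v).withDensity (g i) := by
      funext i
      simpa using gaussianReal_shift (c i) hv
    rw [h1]
    exact pi_withDensity _ _ hgmeas fun i => by
      simp only [Pi.zero_apply]; rw [← gaussianReal_shift (c i) hv]; infer_instance
  have hv0 : (v:ℝ) ≠ 0 := by rw [hvr]; simpa using hn'
  have hF2 : ∫⁻ x, F x ^ 2 ∂shiftP k n 0 = ∏ i, ENNReal.ofReal (rexp (u i ^ 2)) := by
    set g2 : Fin k → ℝ → ℝ≥0∞ := fun i t => ENNReal.ofReal (rexp (-(c i ^ 2) / v))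
        * ENNReal.ofReal (rexp ((2 * c i / v) * t)) with hg2
    have hsq : ∀ x, F x ^ 2 = ∏ i, g2 i (x i) := by
      intro x
      rw [hF, ← Finset.prod_pow]
      refine Finset.prod_congr rfl fun i _ => ?_
      rw [hg, hg2, sq, ← ENNReal.ofReal_mul (Real.exp_nonneg _), ← Real.exp_add]
      dsimp only
      rw [← ENNReal.ofReal_mul (Real.exp_nonneg _), ← Real.exp_add]
      congr 1
      rw [Real.exp_eq_exp]
      field_simp
      ring
    simp_rw [hsq]
    rw [shiftP, lintegral_pi_prod _ inferInstance _ (fun i => by rw [hg2]; fun_prop)]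
    refine Finset.prod_congr rfl fun i _ => ?_
    simp only [Pi.zero_apply, hg2]
    rw [lintegral_const_mul _ (by fun_prop), lintegral_exp_gaussian _ hv,
      ← ENNReal.ofReal_mul (Real.exp_nonneg _), ← Real.exp_add]
    congr 1
    rw [← hcsq i]
    field_simp
    ring
  rw [hQ, withDensity_apply _ hA.compl]
  calc ∫⁻ x in Aᶜ, F x ∂shiftP k n 0
      ≤ ∫⁻ x in Aᶜ, (M + F x ^ 2 / M) ∂shiftP k n 0 :=
        lintegral_mono fun x => aux_le (F x) M hM0
    _ = M * shiftP k n 0 Aᶜ + ∫⁻ x in Aᶜ, F x ^ 2 / M ∂shiftP k n 0 := by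
        rw [lintegral_add_left measurable_const, setLIntegral_const]
    _ ≤ M * shiftP k n 0 Aᶜ + (∏ i, ENNReal.ofReal (rexp (u i ^ 2))) / M := by
        gcongr
        calc ∫⁻ x in Aᶜ, F x ^ 2 / M ∂shiftP k n 0
            ≤ ∫⁻ x, F x ^ 2 / M ∂shiftP k n 0 := setLIntegral_le_lintegral _ _
          _ = (∏ i, ENNReal.ofReal (rexp (u i ^ 2))) / M := by
              simp_rw [div_eq_mul_inv]
              rw [lintegral_mul_const _ (hFmeas.pow_const 2), hF2]




lemma my_le_liminf_mul {a : ℝ≥0∞} (ha : a ≠ ∞) (f : ℕ → ℝ≥0∞) :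
    a * liminf f atTop ≤ liminf (fun n => a * f n) atTop := by
  have := Monotone.map_liminf_of_continuousAt (F := atTop) (f := fun x : ℝ≥0∞ => a * x)
    (fun x y hxy => mul_le_mul_right hxy a) f
    ((ENNReal.continuous_const_mul ha).continuousAt)
  simp only [Function.comp_def] at this
  exact this.le

lemma tendsto_shift {k : ℕ} (est : (n : ℕ) → (Fin k → ℝ) → (Fin k → ℝ))
    (hmeas : ∀ n, Measurable (est n))
    (hsparse : Tendsto (fun n => shiftP k n 0 {x | est n x = 0}) atTop (𝓝 1)) (u : Fin k → ℝ) :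
    Tendsto (fun n => shiftP k n (fun i => -(u i) / Real.sqrt n) {x | est n x = 0})
      atTop (𝓝 1) := by
  set A : ℕ → Set (Fin k → ℝ) := fun n => {x | est n x = 0} with hAdef
  have hA : ∀ n, MeasurableSet (A n) := fun n => (hmeas n) (measurableSet_singleton 0)
  set C0 : ℝ≥0∞ := ∏ i, ENNReal.ofReal (rexp (u i ^ 2)) with hC0def
  have hC0 : C0 ≠ 0 := by
    rw [hC0def]
    exact Finset.prod_ne_zero_iff.mpr fun i _ =>
      ne_of_gt (ENNReal.ofReal_pos.mpr (Real.exp_pos _))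
  have hC0t : C0 ≠ ∞ := by
    rw [hC0def]
    exact (ENNReal.prod_lt_top fun i _ => ENNReal.ofReal_lt_top).ne
  have hpn : Tendsto (fun n => shiftP k n 0 (A n)ᶜ) atTop (𝓝 0) := by
    have h1 : ∀ n, shiftP k n 0 (A n)ᶜ = 1 - shiftP k n 0 (A n) := fun n =>
      prob_compl_eq_one_sub (hA n)
    simp_rw [h1]
    have := ENNReal.Tendsto.sub (tendsto_const_nhds (x := (1:ℝ≥0∞))) hsparse
      (Or.inl ENNReal.one_ne_top)
    simpa using this
  set q : ℕ → ℝ≥0∞ := fun n => shiftP k n (fun i => -(u i) / Real.sqrt n) (A n)ᶜ with hqdef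
  have hle1 : limsup q atTop ≤ 1 :=
    limsup_le_of_le (by isBoundedDefault) (Eventually.of_forall fun n => prob_le_one)
  have hlimsup : ∀ m : ℝ≥0∞, m ≠ 0 → m ≠ ∞ → limsup q atTop ≤ m⁻¹ := by
    intro m hm0 hmt
    set M := C0 * m with hMdef
    have hM0 : M ≠ 0 := mul_ne_zero hC0 hm0
    have hMt : M ≠ ∞ := ENNReal.mul_ne_top hC0t hmt
    have hbd : ∀ᶠ n in atTop, q n ≤ M * shiftP k n 0 (A n)ᶜ + C0 / M :=
      eventually_atTop.mpr ⟨1, fun n hn => step k n hn u (A n) (hA n) M hM0⟩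
    have htend : Tendsto (fun n => M * shiftP k n 0 (A n)ᶜ + C0 / M) atTop (𝓝 (C0 / M)) := by
      have := (ENNReal.Tendsto.const_mul hpn (Or.inr hMt)).add
        (tendsto_const_nhds (x := C0 / M))
      simpa using this
    calc limsup q atTop ≤ limsup (fun n => M * shiftP k n 0 (A n)ᶜ + C0 / M) atTop :=
          limsup_le_limsup hbd
      _ = C0 / M := htend.limsup_eq
      _ = m⁻¹ := by
          rw [hMdef, div_eq_mul_inv, ENNReal.mul_inv (Or.inl hC0) (Or.inl hC0t),
            ← mul_assoc, ENNReal.mul_inv_cancel hC0 hC0t, one_mul]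
  have hq0 : Tendsto q atTop (𝓝 0) := by
    have hls : limsup q atTop = 0 := by
      by_contra hne
      obtain ⟨j, hj⟩ := ENNReal.exists_inv_nat_lt hne
      rcases Nat.eq_zero_or_pos j with rfl | hjpos
      · simp only [Nat.cast_zero, ENNReal.inv_zero] at hj
        exact absurd (hj.trans_le hle1) (by simp)
      · exact absurd (hlimsup j (by exact_mod_cast hjpos.ne') (ENNReal.natCast_ne_top j))
          (not_le.mpr hj)
    exact tendsto_of_le_liminf_of_limsup_le (zero_le') hls.le
  have h2 : ∀ n, shiftP k n (fun i => -(u i) / Real.sqrt n) (A n) = 1 - q n := by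
    intro n
    conv_lhs => rw [← compl_compl (A n)]
    rw [prob_compl_eq_one_sub (hA n).compl]
  change Tendsto (fun n => shiftP k n (fun i => -(u i) / Real.sqrt n) (A n)) atTop (𝓝 1)
  simp_rw [h2]
  have := ENNReal.Tendsto.sub (tendsto_const_nhds (x := (1:ℝ≥0∞))) hq0
    (Or.inl ENNReal.one_ne_top)
  simpa using this


theorem stmt_15 (k : ℕ)
    (est : (n : ℕ) → (Fin k → ℝ) → (Fin k → ℝ))
    (hmeas : ∀ n, Measurable (est n))
    (hsparse : Tendsto (fun n => shiftP k n 0 {x | est n x = 0}) atTop (𝓝 1))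
    (l : ℕ → (Fin k → ℝ) → ℝ) (hl : ∀ n u, 0 ≤ l n u) (hlmeas : ∀ n, Measurable (l n))
    (ρ : ENNReal) (hρ : 0 < ρ) :
    (⨆ u : Fin k → ℝ, ⨆ _ : ENNReal.ofReal (Real.sqrt (∑ i, u i ^ 2)) < ρ,
        Filter.liminf (fun n : ℕ => ENNReal.ofReal (l n u)) atTop) ≤
      Filter.liminf (fun n : ℕ => ⨆ θ : Fin k → ℝ,
        ⨆ _ : ENNReal.ofReal (Real.sqrt n * Real.sqrt (∑ i, θ i ^ 2)) < ρ,
        ∫⁻ x, ENNReal.ofReal (l n (fun i => Real.sqrt n * (est n x i - θ i)))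
          ∂(shiftP k n θ)) atTop := by
  refine iSup_le fun u => iSup_le fun hu => ?_
  have hA : ∀ n : ℕ, MeasurableSet {x : Fin k → ℝ | est n x = 0} :=
    fun n => (hmeas n) (measurableSet_singleton 0)
  set b : ℕ → ℝ≥0∞ :=
    fun n => shiftP k n (fun i => -(u i) / Real.sqrt n) {x | est n x = 0} with hbdef
  have hb : Tendsto b atTop (𝓝 1) := tendsto_shift est hmeas hsparse u
  have h1 : ∀ n : ℕ, 1 ≤ n → ENNReal.ofReal (l n u) * b n ≤
      ⨆ θ : Fin k → ℝ, ⨆ _ : ENNReal.ofReal (Real.sqrt n * Real.sqrt (∑ i, θ i ^ 2)) < ρ,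
        ∫⁻ x, ENNReal.ofReal (l n (fun i => Real.sqrt n * (est n x i - θ i)))
          ∂(shiftP k n θ) := by
    intro n hn
    have hnpos : (0 : ℝ) < n := by exact_mod_cast hn
    have hsn : (0 : ℝ) < Real.sqrt n := Real.sqrt_pos.mpr hnpos
    set c : Fin k → ℝ := fun i => -(u i) / Real.sqrt n with hcdef
    have hcon : ENNReal.ofReal (Real.sqrt n * Real.sqrt (∑ i, c i ^ 2)) < ρ := by
      have hsum : ∑ i, c i ^ 2 = (∑ i, u i ^ 2) / n := by
        rw [hcdef]
        simp_rw [div_pow, neg_sq, Real.sq_sqrt (Nat.cast_nonneg n)]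
        rw [← Finset.sum_div]
      have heq : Real.sqrt n * Real.sqrt (∑ i, c i ^ 2) = Real.sqrt (∑ i, u i ^ 2) := by
        rw [hsum, Real.sqrt_div (by positivity) _, mul_div_cancel₀ _ hsn.ne']
      rw [heq]
      exact hu
    have hx : ∀ x ∈ {x : Fin k → ℝ | est n x = 0},
        ENNReal.ofReal (l n (fun i => Real.sqrt n * (est n x i - c i)))
          = ENNReal.ofReal (l n u) := by
      intro x hx
      have hx0 : est n x = 0 := hx
      have : (fun i => Real.sqrt n * (est n x i - c i)) = u := by
        funext i
        rw [hx0, hcdef]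
        simp only [Pi.zero_apply]
        field_simp
        simp
      rw [this]
    calc ENNReal.ofReal (l n u) * b n
        = ∫⁻ x in {x | est n x = 0},
            ENNReal.ofReal (l n (fun i => Real.sqrt n * (est n x i - c i)))
            ∂shiftP k n c := by
          rw [setLIntegral_congr_fun (hA n) hx, setLIntegral_const]
      _ ≤ ∫⁻ x, ENNReal.ofReal (l n (fun i => Real.sqrt n * (est n x i - c i)))
            ∂shiftP k n c := setLIntegral_le_lintegral _ _
      _ ≤ _ := le_iSup_of_le c (le_iSup
            (fun _ : ENNReal.ofReal (Real.sqrt n * Real.sqrt (∑ i, c i ^ 2)) < ρ =>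
              ∫⁻ x, ENNReal.ofReal (l n (fun i => Real.sqrt n * (est n x i - c i)))
                ∂shiftP k n c) hcon)
  have h2 : liminf (fun n => ENNReal.ofReal (l n u)) atTop ≤
      liminf (fun n => ENNReal.ofReal (l n u) * b n) atTop := by
    refine ENNReal.le_of_forall_lt_one_mul_le fun a ha => ?_
    have hev : ∀ᶠ n in atTop, a * ENNReal.ofReal (l n u) ≤ ENNReal.ofReal (l n u) * b n := by
      filter_upwards [hb.eventually_const_lt ha] with n hn
      rw [mul_comm]
      exact mul_le_mul_right hn.le _
    calc a * liminf (fun n => ENNReal.ofReal (l n u)) atTop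
        ≤ liminf (fun n => a * ENNReal.ofReal (l n u)) atTop :=
          my_le_liminf_mul (ha.trans ENNReal.one_lt_top).ne _
      _ ≤ liminf (fun n => ENNReal.ofReal (l n u) * b n) atTop := liminf_le_liminf hev
  exact h2.trans (liminf_le_liminf (eventually_atTop.mpr ⟨1, h1⟩))
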